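/- For the abstract derivation property used throughout: in any ring R, the commutator map ad(H)(X) = H*X - X*H is a derivation, and for a, ad with [a,ad]=1 and N = ad*a, the iterated adjoint satisfies ad(N)^(2j)(ad^k a^ℓ - ad^ℓ a^k) = (k-ℓ)^(2j) * (ad^k a^ℓ - ad^ℓ a^k) and ad(N)^(2j+1)(ad^k a^ℓ - ad^ℓ a^k) = (k-ℓ)^(2j+1) * (ad^k a^ℓ + ad^ℓ a^k) for all j ≥ 0. -/

import Mathlib

section Aux

variable {R : Type*} [Ring R] (a ad : R)

private lemma aux_Nad (h : a * ad - ad * a = 1) (k : ℕ) :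
    (ad * a) * ad ^ k = ad ^ k * (ad * a) + (k : ℤ) • ad ^ k := by
  induction k with
  | zero => simp
  | succ n ih =>
      have h2 : (ad * a) * ad = ad * (ad * a) + ad := by
        have h1 : a * ad = ad * a + 1 := by rw [← h]; noncomm_ring
        calc (ad * a) * ad = ad * (a * ad) := by noncomm_ring
        _ = ad * (ad * a + 1) := by rw [h1]
        _ = ad * (ad * a) + ad := by noncomm_ring
      have step : (ad * a) * ad ^ (n + 1) = ((ad * a) * ad ^ n) * ad := by
        rw [pow_succ, ← mul_assoc]
      rw [step, ih, pow_succ]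
      push_cast
      rw [add_smul, one_smul, add_mul, smul_mul_assoc, mul_assoc, h2]
      rw [mul_add, ← mul_assoc]
      abel
  
private lemma aux_Na (h : a * ad - ad * a = 1) (l : ℕ) :
    a ^ l * (ad * a) = (ad * a) * a ^ l + (l : ℤ) • a ^ l := by
  induction l with
  | zero => simp
  | succ n ih =>
      have h2 : a * (ad * a) = (ad * a) * a + a := by
        have h1 : a * ad = ad * a + 1 := by rw [← h]; noncomm_ring
        calc a * (ad * a) = (a * ad) * a := by noncomm_ring
        _ = (ad * a + 1) * a := by rw [h1]
        _ = (ad * a) * a + a := by noncomm_ring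
      have step : a ^ (n + 1) * (ad * a) = a * (a ^ n * (ad * a)) := by
        rw [pow_succ', mul_assoc]
      rw [step, ih, pow_succ']
      push_cast
      rw [add_smul, one_smul, mul_add, mul_smul_comm, ← mul_assoc, h2]
      rw [add_mul, mul_assoc]
      abel

private lemma aux_D (h : a * ad - ad * a = 1) (k l : ℕ) :
    (ad * a) * (ad ^ k * a ^ l) - (ad ^ k * a ^ l) * (ad * a)
      = ((k : ℤ) - l) • (ad ^ k * a ^ l) := by
  have h1 := aux_Nad a ad h k
  have h2 := aux_Na a ad h l
  calc (ad * a) * (ad ^ k * a ^ l) - (ad ^ k * a ^ l) * (ad * a)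
      = ((ad * a) * ad ^ k) * a ^ l - ad ^ k * (a ^ l * (ad * a)) := by noncomm_ring
    _ = (ad ^ k * (ad * a) + (k : ℤ) • ad ^ k) * a ^ l
        - ad ^ k * ((ad * a) * a ^ l + (l : ℤ) • a ^ l) := by rw [h1, h2]
    _ = (k : ℤ) • (ad ^ k * a ^ l) - (l : ℤ) • (ad ^ k * a ^ l) := by
        rw [add_mul, mul_add, smul_mul_assoc, mul_smul_comm, mul_assoc, ← mul_assoc (ad ^ k)]
        abel
    _ = ((k : ℤ) - l) • (ad ^ k * a ^ l) := by rw [sub_smul]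

end Aux

/-- The commutator map is a derivation, and the adjoint action of the number operator
`N = ad*a` on the symmetric/antisymmetric combinations is periodic:
`ad(N)^(2j)` preserves `ad^k a^ℓ - ad^ℓ a^k` up to `(k-ℓ)^(2j)`, while `ad(N)^(2j+1)`
sends it to `(k-ℓ)^(2j+1)` times `ad^k a^ℓ + ad^ℓ a^k`. -/
theorem adjoint_action_periodicity {R : Type*} [Ring R]
    (a ad : R) (h : a * ad - ad * a = 1) (k ℓ j : ℕ) :
    (∀ H X Y : R, H * (X * Y) - (X * Y) * H
        = (H * X - X * H) * Y + X * (H * Y - Y * H)) ∧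
    (fun X => (ad * a) * X - X * (ad * a))^[2 * j] (ad ^ k * a ^ ℓ - ad ^ ℓ * a ^ k)
      = ((k : ℤ) - ℓ) ^ (2 * j) • (ad ^ k * a ^ ℓ - ad ^ ℓ * a ^ k) ∧
    (fun X => (ad * a) * X - X * (ad * a))^[2 * j + 1] (ad ^ k * a ^ ℓ - ad ^ ℓ * a ^ k)
      = ((k : ℤ) - ℓ) ^ (2 * j + 1) • (ad ^ k * a ^ ℓ + ad ^ ℓ * a ^ k) := by
  refine ⟨fun H X Y => by noncomm_ring, ?_⟩
  set D : R → R := fun X => (ad * a) * X - X * (ad * a) with hD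
  set c : ℤ := (k : ℤ) - ℓ with hc
  set Sm : R := ad ^ k * a ^ ℓ - ad ^ ℓ * a ^ k with hSm
  set Sp : R := ad ^ k * a ^ ℓ + ad ^ ℓ * a ^ k with hSp
  have h1 := aux_D a ad h k ℓ
  have h2 := aux_D a ad h ℓ k
  have h2' : (ad * a) * (ad ^ ℓ * a ^ k) - (ad ^ ℓ * a ^ k) * (ad * a)
      = -(c • (ad ^ ℓ * a ^ k)) := by
    rw [h2, hc, ← neg_smul]; congr 1; omega
  have hDm : D Sm = c • Sp := by
    simp only [hD, hSm, hSp, hc]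
    have expand : (ad * a) * (ad ^ k * a ^ ℓ - ad ^ ℓ * a ^ k)
        - (ad ^ k * a ^ ℓ - ad ^ ℓ * a ^ k) * (ad * a)
        = ((ad * a) * (ad ^ k * a ^ ℓ) - (ad ^ k * a ^ ℓ) * (ad * a))
          - ((ad * a) * (ad ^ ℓ * a ^ k) - (ad ^ ℓ * a ^ k) * (ad * a)) := by noncomm_ring
    rw [expand, h1, h2', sub_neg_eq_add, ← smul_add]
  have hDp : D Sp = c • Sm := by
    simp only [hD, hSm, hSp, hc]
    have expand : (ad * a) * (ad ^ k * a ^ ℓ + ad ^ ℓ * a ^ k)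
        - (ad ^ k * a ^ ℓ + ad ^ ℓ * a ^ k) * (ad * a)
        = ((ad * a) * (ad ^ k * a ^ ℓ) - (ad ^ k * a ^ ℓ) * (ad * a))
          + ((ad * a) * (ad ^ ℓ * a ^ k) - (ad ^ ℓ * a ^ k) * (ad * a)) := by noncomm_ring
    rw [expand, h1, h2', ← sub_eq_add_neg, ← smul_sub]
  have hDsmul : ∀ (z : ℤ) (X : R), D (z • X) = z • D X := by
    intro z X
    simp only [hD, mul_smul_comm, smul_mul_assoc, smul_sub]
  have key : ∀ n : ℕ, D^[2 * n] Sm = c ^ (2 * n) • Sm := by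
    intro n
    induction n with
    | zero => simp
    | succ m ih =>
        have e : 2 * (m + 1) = (2 * m) + 1 + 1 := by ring
        rw [e, Function.iterate_succ_apply', Function.iterate_succ_apply', ih,
          hDsmul, hDm, hDsmul, hDsmul, hDp, smul_smul, smul_smul]
        congr 1
        ring
  refine ⟨key j, ?_⟩
  rw [Function.iterate_succ_apply', key j, hDsmul, hDm, smul_smul]
  congr 1
  ring
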